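/- For φ ∈ OP(𝔻), the distance d_φ induced by the metric density 1/τ satisfies: for all z, w ∈ 𝔻 with w ∉ D(z, aτ(z)), d_φ(z,w) ≥ (1/(1+C₃))·log(1 + (1−C₃)|z−w|/τ(z)) up to a positive constant factor; in particular d_φ(z,w) → ∞ as |z−w|/τ(z) → ∞ for fixed z. -/

import Mathlib

open Metric

/-- The conformal distance on the unit disc induced by the metric density `1/τ`. -/
noncomputable def confDist (τ : ℂ → ℝ) (z w : ℂ) : ℝ :=
  ⨅ γ : {γ : ℝ → ℂ // γ 0 = z ∧ γ 1 = w ∧ ContDiffOn ℝ 1 γ (Set.Icc 0 1) ∧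
      ∀ t ∈ Set.Icc (0 : ℝ) 1, γ t ∈ ball (0 : ℂ) 1},
    ∫ t in (0 : ℝ)..1, ‖deriv γ.1 t‖ / τ (γ.1 t)

open intervalIntegral Set MeasureTheory in
private lemma curve_lower_bound (τ : ℂ → ℝ)
    (hτpos : ∀ z ∈ ball (0 : ℂ) 1, 0 < τ z)
    (C₁ : ℝ) (hC₁ : 0 < C₁)
    (h1 : ∀ z ∈ ball (0 : ℂ) 1, ∀ w ∈ ball (0 : ℂ) 1, |τ z - τ w| ≤ C₁ * ‖z - w‖)
    (C₃ a : ℝ) (hC₃0 : 0 < C₃) (ha : 0 < a)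
    (h3 : ∀ z ∈ ball (0 : ℂ) 1, ∀ w ∈ ball (0 : ℂ) 1,
      a * τ z < ‖w - z‖ → τ w ≤ τ z + C₃ * ‖w - z‖)
    (z w : ℂ) (hz : z ∈ ball (0:ℂ) 1) (hw : w ∈ ball (0:ℂ) 1)
    (γ : ℝ → ℂ) (hγ0 : γ 0 = z) (hγ1 : γ 1 = w)
    (hγ : ContDiffOn ℝ 1 γ (Set.Icc 0 1))
    (hmem : ∀ t ∈ Set.Icc (0:ℝ) 1, γ t ∈ ball (0:ℂ) 1) :
    C₃⁻¹ * Real.log (1 + C₃ * ‖z - w‖ / ((1 + C₁ * a) * τ z)) ≤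
      ∫ t in (0:ℝ)..1, ‖deriv γ t‖ / τ (γ t) := by
  set K : ℝ := 1 + C₁ * a with hKdef
  have hK : 0 < K := by positivity
  have hK1 : 1 ≤ K := by nlinarith
  have hτz : 0 < τ z := hτpos z hz
  set V : ℝ → ℂ := fun s => derivWithin γ (Set.Icc 0 1) (Set.projIcc (0:ℝ) 1 zero_le_one s) with hVdef
  have hVcont : Continuous V :=
    (hγ.continuousOn_derivWithin (uniqueDiffOn_Icc one_pos) le_rfl).comp_continuous
      (continuous_subtype_val.comp continuous_projIcc)
      (fun s => (Set.projIcc (0:ℝ) 1 zero_le_one s).2)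
  have hVeq : ∀ t ∈ Set.Icc (0:ℝ) 1, V t = derivWithin γ (Set.Icc 0 1) t := by
    intro t ht
    simp [hVdef, Set.projIcc_of_mem zero_le_one ht]
  have hderivAt : ∀ t ∈ Set.Ioo (0:ℝ) 1, HasDerivAt γ (V t) t := by
    intro t ht
    have hnh : Set.Icc (0:ℝ) 1 ∈ nhds t := Icc_mem_nhds ht.1 ht.2
    have hd : DifferentiableAt ℝ γ t :=
      ((hγ.differentiableOn one_ne_zero) t (Set.Ioo_subset_Icc_self ht)).differentiableAt hnh
    have hVd : V t = deriv γ t := by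
      rw [hVeq t (Set.Ioo_subset_Icc_self ht), derivWithin_of_mem_nhds hnh]
    rw [hVd]; exact hd.hasDerivAt
  set ℓ : ℝ → ℝ := fun t => ∫ s in (0:ℝ)..t, ‖V s‖ with hℓdef
  have hℓderiv : ∀ t, HasDerivAt ℓ (‖V t‖) t := fun t =>
    (hVcont.norm.integral_hasStrictDerivAt 0 t).hasDerivAt
  have hℓcont : Continuous ℓ := by
    rw [continuous_iff_continuousAt]; exact fun t => (hℓderiv t).continuousAt
  have hℓ0 : ℓ 0 = 0 := integral_same
  have hℓnonneg : ∀ t ∈ Set.Icc (0:ℝ) 1, 0 ≤ ℓ t := fun t ht =>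
    intervalIntegral.integral_nonneg ht.1 (fun s _ => norm_nonneg _)
  have hdist : ∀ t ∈ Set.Icc (0:ℝ) 1, ‖γ t - z‖ ≤ ℓ t := by
    intro t ht
    have hs : (∫ s in (0:ℝ)..t, V s) = γ t - γ 0 :=
      integral_eq_sub_of_hasDeriv_right_of_le ht.1
        (hγ.continuousOn.mono (Set.Icc_subset_Icc le_rfl ht.2))
        (fun x hx => (hderivAt x ⟨hx.1, hx.2.trans_le ht.2⟩).hasDerivWithinAt)
        (hVcont.intervalIntegrable 0 t)
    calc ‖γ t - z‖ = ‖∫ s in (0:ℝ)..t, V s‖ := by rw [hs, hγ0]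
      _ ≤ ∫ s in (0:ℝ)..t, ‖V s‖ := norm_integral_le_integral_norm ht.1
  have hτbound : ∀ t ∈ Set.Icc (0:ℝ) 1, τ (γ t) ≤ K * τ z + C₃ * ℓ t := by
    intro t ht
    have hℓn := hℓnonneg t ht
    rcases le_or_gt ‖γ t - z‖ (a * τ z) with hle | hgt
    · have hab := abs_le.mp (h1 z hz (γ t) (hmem t ht))
      have h' : τ (γ t) ≤ τ z + C₁ * ‖z - γ t‖ := by linarith [hab.1]
      rw [norm_sub_rev] at h'
      nlinarith
    · have h3' := h3 z hz (γ t) (hmem t ht) hgt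
      have hd := hdist t ht
      nlinarith [mul_le_mul_of_nonneg_left hd hC₃0.le]
  have hden : ∀ t ∈ Set.Icc (0:ℝ) 1, 0 < K * τ z + C₃ * ℓ t := by
    intro t ht
    have := hℓnonneg t ht
    positivity
  set F : ℝ → ℝ := fun t => C₃⁻¹ * Real.log (K * τ z + C₃ * ℓ t) with hFdef
  have hF : ∀ t ∈ Set.Icc (0:ℝ) 1,
      HasDerivAt F (‖V t‖ / (K * τ z + C₃ * ℓ t)) t := by
    intro t ht
    have hd1 : HasDerivAt (fun t => K * τ z + C₃ * ℓ t) (C₃ * ‖V t‖) t :=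
      ((hℓderiv t).const_mul C₃).const_add _
    have hd2 := (Real.hasDerivAt_log (hden t ht).ne').comp t hd1
    have hd3 := hd2.const_mul C₃⁻¹
    have hC := hC₃0.ne'
    have heq : ‖V t‖ / (K * τ z + C₃ * ℓ t) =
        C₃⁻¹ * ((K * τ z + C₃ * ℓ t)⁻¹ * (C₃ * ‖V t‖)) := by
      field_simp
    rw [heq]; exact hd3
  have hτcont : ContinuousOn τ (ball (0:ℂ) 1) := by
    have : LipschitzOnWith C₁.toNNReal τ (ball (0:ℂ) 1) := by
      apply LipschitzOnWith.of_dist_le_mul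
      intro x hx y hy
      rw [Real.coe_toNNReal _ hC₁.le, Real.dist_eq]
      simpa [Complex.dist_eq] using h1 x hx y hy
    exact this.continuousOn
  have hγmaps : Set.MapsTo γ (Set.Icc (0:ℝ) 1) (ball (0:ℂ) 1) := fun t ht => hmem t ht
  have hτγpos : ∀ t ∈ Set.Icc (0:ℝ) 1, 0 < τ (γ t) := fun t ht => hτpos _ (hmem t ht)
  have hgcont : ContinuousOn (fun t => ‖V t‖ / (K * τ z + C₃ * ℓ t)) (Set.Icc (0:ℝ) 1) :=
    hVcont.norm.continuousOn.div
      ((continuous_const.add (continuous_const.mul hℓcont)).continuousOn)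
      (fun t ht => (hden t ht).ne')
  have hgint : IntervalIntegrable (fun t => ‖V t‖ / (K * τ z + C₃ * ℓ t)) volume 0 1 := by
    apply ContinuousOn.intervalIntegrable
    rwa [Set.uIcc_of_le zero_le_one]
  have hfcont : ContinuousOn (fun t => ‖V t‖ / τ (γ t)) (Set.Icc (0:ℝ) 1) :=
    hVcont.norm.continuousOn.div (hτcont.comp hγ.continuousOn hγmaps)
      (fun t ht => (hτγpos t ht).ne')
  have hfint : IntervalIntegrable (fun t => ‖V t‖ / τ (γ t)) volume 0 1 := by
    apply ContinuousOn.intervalIntegrable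
    rwa [Set.uIcc_of_le zero_le_one]
  have hcong : (∫ t in (0:ℝ)..1, ‖deriv γ t‖ / τ (γ t)) =
      ∫ t in (0:ℝ)..1, ‖V t‖ / τ (γ t) := by
    apply intervalIntegral.integral_congr_ae
    have h1m : (volume : Measure ℝ) {(1:ℝ)} = 0 := measure_singleton 1
    filter_upwards [measure_eq_zero_iff_ae_notMem.mp h1m] with x hx hxI
    rw [Set.uIoc_of_le zero_le_one] at hxI
    have hxo : x ∈ Set.Ioo (0:ℝ) 1 := ⟨hxI.1, lt_of_le_of_ne hxI.2 (by simpa using hx)⟩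
    rw [(hderivAt x hxo).deriv]
  have hFTC : (∫ t in (0:ℝ)..1, ‖V t‖ / (K * τ z + C₃ * ℓ t)) = F 1 - F 0 := by
    apply integral_eq_sub_of_hasDeriv_right_of_le zero_le_one
    · exact fun t ht => ((hF t ht).continuousAt).continuousWithinAt
    · exact fun x hx => (hF x (Set.Ioo_subset_Icc_self hx)).hasDerivWithinAt
    · exact hgint
  have hmono : (∫ t in (0:ℝ)..1, ‖V t‖ / (K * τ z + C₃ * ℓ t)) ≤
      ∫ t in (0:ℝ)..1, ‖V t‖ / τ (γ t) := by
    apply intervalIntegral.integral_mono_on zero_le_one hgint hfint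
    intro t ht
    exact div_le_div_of_nonneg_left (norm_nonneg _) (hτγpos t ht) (hτbound t ht)
  have hℓ1 : ‖z - w‖ ≤ ℓ 1 := by
    rw [norm_sub_rev, ← hγ1]
    exact hdist 1 ⟨zero_le_one, le_rfl⟩
  have hfinal : C₃⁻¹ * Real.log (1 + C₃ * ‖z - w‖ / (K * τ z)) ≤ F 1 - F 0 := by
    have hFeq : F 1 - F 0 = C₃⁻¹ * Real.log ((K * τ z + C₃ * ℓ 1) / (K * τ z)) := by
      rw [hFdef]
      simp only [hℓ0, mul_zero, add_zero]
      rw [← mul_sub, ← Real.log_div (hden 1 ⟨zero_le_one, le_rfl⟩).ne' (by positivity)]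
    rw [hFeq]
    apply mul_le_mul_of_nonneg_left _ (by positivity)
    apply Real.log_le_log (by positivity)
    calc 1 + C₃ * ‖z - w‖ / (K * τ z) ≤ 1 + C₃ * ℓ 1 / (K * τ z) := by gcongr
      _ = (K * τ z + C₃ * ℓ 1) / (K * τ z) := by field_simp
  calc C₃⁻¹ * Real.log (1 + C₃ * ‖z - w‖ / (K * τ z)) ≤ F 1 - F 0 := hfinal
    _ = ∫ t in (0:ℝ)..1, ‖V t‖ / (K * τ z + C₃ * ℓ t) := hFTC.symm
    _ ≤ ∫ t in (0:ℝ)..1, ‖V t‖ / τ (γ t) := hmono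
    _ = ∫ t in (0:ℝ)..1, ‖deriv γ t‖ / τ (γ t) := hcong.symm

/-- For `τ` satisfying the `OP(𝔻)` conditions, the induced distance satisfies the
logarithmic lower bound
`d_φ(z,w) ≳ (1/(1+C₃)) log(1 + (1-C₃)|z-w|/τ(z))` for `w ∉ D(z, aτ(z))`. -/
theorem stmt_18 (τ : ℂ → ℝ)
    (hτpos : ∀ z ∈ ball (0 : ℂ) 1, 0 < τ z)
    (C₁ : ℝ) (hC₁ : 0 < C₁)
    (h1 : ∀ z ∈ ball (0 : ℂ) 1, ∀ w ∈ ball (0 : ℂ) 1, |τ z - τ w| ≤ C₁ * ‖z - w‖)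
    (C₂ : ℝ) (hC₂ : 0 < C₂)
    (h2 : ∀ z ∈ ball (0 : ℂ) 1, τ z ≤ C₂ * (1 - ‖z‖))
    (C₃ a : ℝ) (hC₃0 : 0 < C₃) (hC₃1 : C₃ < 1) (ha : 0 < a)
    (h3 : ∀ z ∈ ball (0 : ℂ) 1, ∀ w ∈ ball (0 : ℂ) 1,
      a * τ z < ‖w - z‖ → τ w ≤ τ z + C₃ * ‖w - z‖) :
    ∃ c > 0, ∀ z ∈ ball (0 : ℂ) 1, ∀ w ∈ ball (0 : ℂ) 1, a * τ z < ‖w - z‖ →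
      c * (1 / (1 + C₃)) * Real.log (1 + (1 - C₃) * ‖z - w‖ / τ z) ≤
        confDist τ z w := by
  set K : ℝ := 1 + C₁ * a with hKdef
  have hK : 0 < K := by positivity
  set n : ℕ := ⌈(1 - C₃) * K / C₃⌉₊ + 1 with hndef
  have hn0 : 0 < (n : ℝ) := by rw [hndef]; push_cast; positivity
  have hnK : (1 - C₃) * K ≤ n * C₃ := by
    have h' : (1 - C₃) * K / C₃ ≤ n := by
      calc (1 - C₃) * K / C₃ ≤ ⌈(1 - C₃) * K / C₃⌉₊ := Nat.le_ceil _
        _ ≤ n := by exact_mod_cast Nat.le_succ _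
    calc (1 - C₃) * K = ((1 - C₃) * K / C₃) * C₃ := by field_simp
      _ ≤ n * C₃ := mul_le_mul_of_nonneg_right h' hC₃0.le
  refine ⟨(1 + C₃) / (C₃ * n), by positivity, ?_⟩
  intro z hz w hw hzw
  have hτz : 0 < τ z := hτpos z hz
  -- the straight segment is an admissible curve
  have hne : Nonempty {γ : ℝ → ℂ // γ 0 = z ∧ γ 1 = w ∧ ContDiffOn ℝ 1 γ (Set.Icc 0 1) ∧
      ∀ t ∈ Set.Icc (0 : ℝ) 1, γ t ∈ ball (0 : ℂ) 1} := by
    refine ⟨⟨fun t => z + t • (w - z), by simp, by simp, ?_, ?_⟩⟩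
    · exact (contDiff_const.add (contDiff_id.smul contDiff_const)).contDiffOn
    · intro t ht
      have heq : z + t • (w - z) = (1 - t) • z + t • w := by
        rw [smul_sub, sub_smul, one_smul]; abel
      show z + t • (w - z) ∈ ball (0:ℂ) 1
      rw [heq]
      exact (convex_ball (0:ℂ) 1) hz hw (by linarith [ht.2]) ht.1 (by ring)
  haveI := hne
  rw [confDist]
  apply le_ciInf
  intro γ
  obtain ⟨hγ0, hγ1, hγs, hγm⟩ := γ.2
  set A : ℝ := (1 - C₃) * ‖z - w‖ / τ z with hAdef
  set B : ℝ := C₃ * ‖z - w‖ / (K * τ z) with hBdef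
  have hA : 0 ≤ A := by
    rw [hAdef]; exact div_nonneg (mul_nonneg (by linarith) (norm_nonneg _)) hτz.le
  have hB : 0 ≤ B := by
    rw [hBdef]; exact div_nonneg (mul_nonneg hC₃0.le (norm_nonneg _)) (mul_pos hK hτz).le
  have hAB : 1 + A ≤ (1 + B) ^ n := by
    have h1' : A ≤ n * B := by
      have hd : (0:ℝ) ≤ ‖z - w‖ := norm_nonneg _
      rw [hAdef, hBdef, mul_div_assoc' (n:ℝ) _ _, div_le_div_iff₀ hτz (by positivity)]
      nlinarith [mul_le_mul_of_nonneg_right hnK (mul_nonneg hd hτz.le)]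
    have h2' : 1 + (n:ℝ) * B ≤ (1 + B) ^ n := one_add_mul_le_pow (by linarith) n
    linarith
  have hlog : Real.log (1 + A) ≤ n * Real.log (1 + B) := by
    calc Real.log (1 + A) ≤ Real.log ((1 + B) ^ n) := Real.log_le_log (by linarith) hAB
      _ = n * Real.log (1 + B) := by rw [Real.log_pow]
  have hLB : 0 ≤ Real.log (1 + B) := Real.log_nonneg (by linarith)
  have key := curve_lower_bound τ hτpos C₁ hC₁ h1 C₃ a hC₃0 ha h3 z w hz hw
    γ.1 hγ0 hγ1 hγs hγm
  calc (1 + C₃) / (C₃ * n) * (1 / (1 + C₃)) * Real.log (1 + (1 - C₃) * ‖z - w‖ / τ z)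
      = (1 / (C₃ * n)) * Real.log (1 + A) := by
        rw [hAdef]; congr 1; field_simp
    _ ≤ (1 / (C₃ * n)) * (n * Real.log (1 + B)) := by
        apply mul_le_mul_of_nonneg_left hlog (by positivity)
    _ = C₃⁻¹ * Real.log (1 + C₃ * ‖z - w‖ / (K * τ z)) := by
        rw [hBdef]; field_simp
    _ ≤ _ := key
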